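/- If g : (ZMod p)^{n-s} → ZMod (p^k) is a generalized bent function with dual g* and sign function μ_g, and f : (ZMod p)^n → ZMod (p^k) is defined by f(x) = g(x M^T R^T) + p^{k−1}(x·t) for an invertible matrix M ∈ GL(n, 𝔽_p), a vector t ∈ (ZMod p)^n, and a full-rank (n−s)×n matrix R over 𝔽_p, then f is a generalized s-plateaued function: |W_f(a)| = p^{(n+s)/2} for a in the set {t + eM : e ∈ rowspace(R)} and W_f(a) = 0 otherwise. -/

import Mathlib

/-- The complex primitive `m`-th root of unity `e^{2πi/m}`. -/
noncomputable def zeta (m : ℕ) : ℂ := Complex.exp (2 * Real.pi * Complex.I / m)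

/-- Inner product on `(ZMod p)^n`. -/
def dot {p n : ℕ} (a x : Fin n → ZMod p) : ZMod p := ∑ i, a i * x i

/-- Walsh transform of a generalized p-ary function `f : (ZMod p)^n → ZMod (p^k)`. -/
noncomputable def walsh (p n k : ℕ) [Fact (Nat.Prime p)]
    (f : (Fin n → ZMod p) → ZMod (p ^ k)) (a : Fin n → ZMod p) : ℂ :=
  ∑ x : Fin n → ZMod p, zeta (p ^ k) ^ (f x).val * zeta p ^ ((-(dot a x)).val)

section Helpers

open Matrix Finset

lemma dot_eq {p n : ℕ} (a x : Fin n → ZMod p) : dot a x = a ⬝ᵥ x := rfl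

lemma zeta_prim (m : ℕ) (hm : m ≠ 0) : IsPrimitiveRoot (zeta m) m := by
  have := Complex.isPrimitiveRoot_exp m hm
  simpa [zeta, mul_comm, mul_div_assoc] using this

lemma zeta_pow_self (m : ℕ) (hm : m ≠ 0) : zeta m ^ m = 1 := (zeta_prim m hm).pow_eq_one

lemma zeta_pow_mod (m : ℕ) (hm : m ≠ 0) (a : ℕ) : zeta m ^ a = zeta m ^ (a % m) :=
  pow_eq_pow_mod a (zeta_pow_self m hm)

lemma zeta_val_add (m : ℕ) [NeZero m] (u v : ZMod m) :
    zeta m ^ (u + v).val = zeta m ^ u.val * zeta m ^ v.val := by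
  rw [ZMod.val_add, ← zeta_pow_mod m (NeZero.ne m), pow_add]

lemma zeta_val_natCast (m : ℕ) [NeZero m] (a : ℕ) :
    zeta m ^ ((a : ZMod m)).val = zeta m ^ a := by
  rw [ZMod.val_natCast, ← zeta_pow_mod m (NeZero.ne m)]

lemma zeta_pow_pow (p k : ℕ) (hp : p ≠ 0) (hk : 1 ≤ k) :
    zeta (p ^ k) ^ (p ^ (k - 1)) = zeta p := by
  rw [zeta, zeta, ← Complex.exp_nat_mul]
  congr 1
  have hk' : p ^ k = p ^ (k - 1) * p := by
    rw [← pow_succ, Nat.sub_add_cancel hk]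
  have h1 : ((p : ℂ) ^ (k - 1)) ≠ 0 := pow_ne_zero _ (Nat.cast_ne_zero.mpr hp)
  have h2 : (p : ℂ) ≠ 0 := Nat.cast_ne_zero.mpr hp
  rw [hk']
  push_cast
  field_simp

lemma zeta_val_ne_one (p : ℕ) [hp : Fact (Nat.Prime p)] (u : ZMod p) (hu : u ≠ 0) :
    zeta p ^ u.val ≠ 1 := by
  intro h
  have hdvd := ((zeta_prim p hp.out.ne_zero).pow_eq_one_iff_dvd u.val).mp h
  have hlt : u.val < p := ZMod.val_lt u
  have h0 : u.val = 0 := Nat.eq_zero_of_dvd_of_lt hdvd hlt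
  exact hu ((ZMod.val_eq_zero u).mp h0)
  
lemma fiber_card {V W : Type*} [AddCommGroup V] [Fintype V] [DecidableEq V]
    [AddCommGroup W] [Fintype W] [DecidableEq W]
    (φ : V →+ W) (hφ : Function.Surjective φ) (z : W) :
    (univ.filter fun y => φ y = z).card = Fintype.card V / Fintype.card W := by
  have key : ∀ z : W, (univ.filter fun y => φ y = z).card = (univ.filter fun y => φ y = 0).card := by
    intro z
    obtain ⟨y0, hy0⟩ := hφ z
    apply Finset.card_bij (fun y _ => y - y0)
    · intro a ha
      simp only [mem_filter, mem_univ, true_and] at ha ⊢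
      simp [map_sub, ha, hy0]
    · intro a _ b _ h
      simpa using congrArg (· + y0) h
    · intro b hb
      refine ⟨b + y0, ?_, by simp⟩
      simp only [mem_filter, mem_univ, true_and] at hb ⊢
      simp [map_add, hb, hy0]
  have total : ∑ z : W, (univ.filter fun y => φ y = z).card = Fintype.card V := by
    rw [← Finset.card_eq_sum_card_fiberwise (f := φ) (fun x _ => mem_univ _)]
    rfl
  have htot : Fintype.card W * (univ.filter fun y => φ y = 0).card = Fintype.card V := by
    rw [← total]
    rw [Finset.sum_congr rfl (fun z _ => key z), Finset.sum_const, smul_eq_mul, Finset.card_univ]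
  rw [key z, ← htot, Nat.mul_div_cancel_left _ Fintype.card_pos]

lemma sum_comp_surj {V W : Type*} [AddCommGroup V] [Fintype V] [DecidableEq V]
    [AddCommGroup W] [Fintype W] [DecidableEq W]
    (φ : V →+ W) (hφ : Function.Surjective φ) (F : W → ℂ) :
    ∑ y : V, F (φ y) = (Fintype.card V / Fintype.card W : ℕ) * ∑ z : W, F z := by
  rw [Finset.sum_comp F φ]
  have himg : (univ : Finset V).image φ = univ := by ext w; simp [hφ w]
  rw [himg, Finset.mul_sum]
  refine Finset.sum_congr rfl fun z _ => ?_
  rw [fiber_card φ hφ z, nsmul_eq_mul]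

lemma factor_lemma {p : ℕ} [Fact (Nat.Prime p)] {n m : ℕ} (R : Matrix (Fin m) (Fin n) (ZMod p))
    (hR : Function.Surjective (fun x : Fin n → ZMod p => Matrix.vecMul x Rᵀ))
    (b : Fin n → ZMod p)
    (hb : ∀ v : Fin n → ZMod p, Matrix.vecMul v Rᵀ = 0 → dot b v = 0) :
    ∃ c, b = Matrix.vecMul c R := by
  simp only [dot_eq] at hb
  have hσ : ∀ z : Fin m → ZMod p, vecMul (hR z).choose Rᵀ = z := fun z => (hR z).choose_spec
  have hwd : ∀ x y : Fin n → ZMod p, vecMul x Rᵀ = vecMul y Rᵀ → b ⬝ᵥ x = b ⬝ᵥ y := by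
    intro x y h
    have h0 : b ⬝ᵥ (x - y) = 0 := hb _ (by rw [sub_vecMul, h, sub_self])
    rw [dotProduct_sub] at h0
    linear_combination h0
  set ψ : (Fin m → ZMod p) → ZMod p := fun z => b ⬝ᵥ (hR z).choose with hψ
  have hψφ : ∀ x, ψ (vecMul x Rᵀ) = b ⬝ᵥ x := fun x => hwd _ _ (hσ _)
  have hadd : ∀ z w, ψ (z + w) = ψ z + ψ w := by
    intro z w
    have h1 : vecMul ((hR z).choose + (hR w).choose) Rᵀ = z + w := by
      rw [add_vecMul, hσ, hσ]
    have h2 := hψφ ((hR z).choose + (hR w).choose)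
    rw [h1] at h2
    rw [h2, dotProduct_add]
  have hsmul : ∀ (a : ZMod p) z, ψ (a • z) = a * ψ z := by
    intro a z
    have h1 : vecMul (a • (hR z).choose) Rᵀ = a • z := by
      rw [smul_vecMul, hσ]
    have h2 := hψφ (a • (hR z).choose)
    rw [h1] at h2
    rw [h2, dotProduct_smul, smul_eq_mul]
  set Ψ : (Fin m → ZMod p) →ₗ[ZMod p] ZMod p :=
    ⟨⟨ψ, fun x y => hadd x y⟩, by intro a z; simpa using hsmul a z⟩ with hΨ
  refine ⟨fun i => Ψ (fun j => if i = j then 1 else 0), ?_⟩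
  funext j
  have h3 : b j = b ⬝ᵥ Pi.single j 1 := by rw [dotProduct_single, mul_one]
  rw [h3, ← hψφ, show ψ (vecMul (Pi.single j 1) Rᵀ) = Ψ (vecMul (Pi.single j 1) Rᵀ) from rfl,
    LinearMap.pi_apply_eq_sum_univ]
  simp only [smul_eq_mul, vecMul, dotProduct, transpose_apply, Pi.single_apply,
    ite_mul, one_mul, zero_mul, Finset.sum_ite_eq, Finset.sum_ite_eq', Finset.mem_univ, if_true]
  exact Finset.sum_congr rfl fun i _ => mul_comm _ _

end Helpers

open Matrix in
theorem stmt6 (p n k s : ℕ) [Fact (Nat.Prime p)] (hk : 1 ≤ k) (hs : 0 < s) (hsn : s < n)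
    (hps : p = 2 → Even (n + s))
    (g : (Fin (n - s) → ZMod p) → ZMod (p ^ k))
    (hg : ∀ b, ‖walsh p (n - s) k g b‖ = (p : ℝ) ^ (((n : ℝ) - (s : ℝ)) / 2))
    (M : Matrix (Fin n) (Fin n) (ZMod p)) (hM : IsUnit M)
    (R : Matrix (Fin (n - s)) (Fin n) (ZMod p))
    (hR : Function.Surjective (fun x : Fin n → ZMod p => Matrix.vecMul x Rᵀ))
    (t : Fin n → ZMod p)
    (f : (Fin n → ZMod p) → ZMod (p ^ k))
    (hf : ∀ x, f x = g (Matrix.vecMul (Matrix.vecMul x Mᵀ) Rᵀ) +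
      (p : ZMod (p ^ k)) ^ (k - 1) * (((dot x t).val : ℕ) : ZMod (p ^ k))) :
    ∀ a : Fin n → ZMod p,
      ((∃ c : Fin (n - s) → ZMod p, a = t + Matrix.vecMul (Matrix.vecMul c R) M) →
        ‖walsh p n k f a‖ = (p : ℝ) ^ (((n : ℝ) + (s : ℝ)) / 2)) ∧
      ((¬ ∃ c : Fin (n - s) → ZMod p, a = t + Matrix.vecMul (Matrix.vecMul c R) M) →
        walsh p n k f a = 0) := by
  intro a
  have hp : Nat.Prime p := Fact.out
  haveI : NeZero p := ⟨hp.ne_zero⟩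
  haveI : NeZero (p ^ k) := ⟨pow_ne_zero k hp.ne_zero⟩
  have hMdet : IsUnit M.det := (Matrix.isUnit_iff_isUnit_det M).mp hM
  set b : Fin n → ZMod p := Matrix.vecMul (a - t) M⁻¹ with hbdef
  -- Step A+B : walsh f a equals the model sum S
  have hS : walsh p n k f a =
      ∑ y : Fin n → ZMod p,
        zeta (p ^ k) ^ (g (Matrix.vecMul y Rᵀ)).val * zeta p ^ ((-(dot b y)).val) := by
    have hterm : ∀ x, zeta (p ^ k) ^ (f x).val * zeta p ^ ((-(dot a x)).val) =
        zeta (p ^ k) ^ (g (Matrix.vecMul (Matrix.vecMul x Mᵀ) Rᵀ)).val *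
          zeta p ^ ((-(dot (a - t) x)).val) := by
      intro x
      rw [hf x, zeta_val_add]
      have hc : (p : ZMod (p ^ k)) ^ (k - 1) * (((dot x t).val : ℕ) : ZMod (p ^ k)) =
          ((p ^ (k - 1) * (dot x t).val : ℕ) : ZMod (p ^ k)) := by push_cast; ring
      rw [hc, zeta_val_natCast, pow_mul, zeta_pow_pow p k hp.ne_zero hk]
      have hd : (-(dot (a - t) x)) = dot x t + (-(dot a x)) := by
        simp only [dot_eq, sub_dotProduct]
        rw [dotProduct_comm x t]
        ring
      rw [hd, zeta_val_add]
      ring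
    rw [walsh, Finset.sum_congr rfl fun x _ => hterm x]
    -- change of variables x = vecMul y (M⁻¹)ᵀ
    have hMM : Mᵀ * (M⁻¹)ᵀ = 1 := by
      rw [← Matrix.transpose_mul, Matrix.nonsing_inv_mul M hMdet, Matrix.transpose_one]
    have hMM' : (M⁻¹)ᵀ * Mᵀ = 1 := by
      rw [← Matrix.transpose_mul, Matrix.mul_nonsing_inv M hMdet, Matrix.transpose_one]
    set σ : (Fin n → ZMod p) ≃ (Fin n → ZMod p) :=
      { toFun := fun x => Matrix.vecMul x Mᵀ
        invFun := fun y => Matrix.vecMul y (M⁻¹)ᵀ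
        left_inv := fun x => by show Matrix.vecMul (Matrix.vecMul x Mᵀ) (M⁻¹)ᵀ = x; rw [Matrix.vecMul_vecMul, hMM, Matrix.vecMul_one]
        right_inv := fun y => by show Matrix.vecMul (Matrix.vecMul y (M⁻¹)ᵀ) Mᵀ = y; rw [Matrix.vecMul_vecMul, hMM', Matrix.vecMul_one] } with hσ
    rw [← Equiv.sum_comp σ.symm
      (fun x => zeta (p ^ k) ^ (g (Matrix.vecMul (Matrix.vecMul x Mᵀ) Rᵀ)).val *
        zeta p ^ ((-(dot (a - t) x)).val))]
    refine Finset.sum_congr rfl fun y _ => ?_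
    have h1 : Matrix.vecMul (σ.symm y) Mᵀ = y := σ.right_inv y
    have h2 : dot (a - t) (σ.symm y) = dot b y := by
      show dot (a - t) (Matrix.vecMul y (M⁻¹)ᵀ) = dot b y
      simp only [dot_eq, Matrix.vecMul_transpose, Matrix.dotProduct_mulVec, hbdef]
    rw [h1, h2]
  -- equivalence of the two conditions
  have hcond : (∃ c : Fin (n - s) → ZMod p, a = t + Matrix.vecMul (Matrix.vecMul c R) M) ↔
      (∃ c : Fin (n - s) → ZMod p, b = Matrix.vecMul c R) := by
    constructor
    · rintro ⟨c, rfl⟩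
      refine ⟨c, ?_⟩
      rw [hbdef, add_sub_cancel_left, Matrix.vecMul_vecMul,
        Matrix.mul_nonsing_inv M hMdet, Matrix.vecMul_one]
    · rintro ⟨c, hc⟩
      refine ⟨c, ?_⟩
      have : Matrix.vecMul b M = a - t := by
        rw [hbdef, Matrix.vecMul_vecMul, Matrix.nonsing_inv_mul M hMdet, Matrix.vecMul_one]
      rw [← hc, this]
      ring
  constructor
  · -- plateaued value case
    rintro hex
    obtain ⟨c, hc⟩ := hcond.mp hex
    have hby : ∀ y, (-(dot b y)) = -(dot c (Matrix.vecMul y Rᵀ)) := by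
      intro y
      rw [hc]
      simp only [dot_eq, Matrix.vecMul_transpose, Matrix.dotProduct_mulVec]
    have hS2 : walsh p n k f a = ((p : ℕ) ^ s : ℕ) * walsh p (n - s) k g c := by
      rw [hS, Finset.sum_congr rfl fun y _ => by rw [hby y]]
      set φA : (Fin n → ZMod p) →+ (Fin (n - s) → ZMod p) :=
        AddMonoidHom.mk' (fun y => Matrix.vecMul y Rᵀ)
          (fun x y => Matrix.add_vecMul Rᵀ x y) with hφA
      have := sum_comp_surj φA hR
        (fun z => zeta (p ^ k) ^ (g z).val * zeta p ^ ((-(dot c z)).val))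
      have this2 : (∑ y : Fin n → ZMod p, zeta (p ^ k) ^ (g (Matrix.vecMul y Rᵀ)).val *
            zeta p ^ ((-(dot c (Matrix.vecMul y Rᵀ))).val)) =
          ((Fintype.card (Fin n → ZMod p) / Fintype.card (Fin (n - s) → ZMod p) : ℕ) : ℂ) *
            ∑ z, zeta (p ^ k) ^ (g z).val * zeta p ^ ((-(dot c z)).val) := this
      rw [this2, walsh]
      congr 2
      · rw [Fintype.card_fun, Fintype.card_fun, ZMod.card, Fintype.card_fin, Fintype.card_fin,
          Nat.pow_div (Nat.sub_le n s) hp.pos, Nat.sub_sub_self hsn.le]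
    rw [hS2, norm_mul, Complex.norm_natCast, hg c]
    push_cast
    rw [← Real.rpow_natCast (p : ℝ) s, ← Real.rpow_add (by exact_mod_cast hp.pos)]
    congr 1
    ring
  · -- zero case
    intro hex
    have hnc : ¬ ∃ c : Fin (n - s) → ZMod p, b = Matrix.vecMul c R := fun h => hex (hcond.mpr h)
    obtain ⟨v, hv0, hbv⟩ : ∃ v, Matrix.vecMul v Rᵀ = 0 ∧ dot b v ≠ 0 := by
      by_contra h
      push_neg at h
      exact hnc (factor_lemma R hR b h)
    rw [hS]
    set S := ∑ y : Fin n → ZMod p,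
        zeta (p ^ k) ^ (g (Matrix.vecMul y Rᵀ)).val * zeta p ^ ((-(dot b y)).val) with hSdef
    have htrans : S = S * zeta p ^ ((-(dot b v)).val) := by
      rw [hSdef]
      nth_rewrite 1 [← Equiv.sum_comp (Equiv.addRight v)
        (fun y => zeta (p ^ k) ^ (g (Matrix.vecMul y Rᵀ)).val * zeta p ^ ((-(dot b y)).val))]
      rw [Finset.sum_mul]
      refine Finset.sum_congr rfl fun y _ => ?_
      simp only [Equiv.coe_addRight]
      have h1 : Matrix.vecMul (y + v) Rᵀ = Matrix.vecMul y Rᵀ := by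
        rw [Matrix.add_vecMul, hv0, add_zero]
      have h2 : (-(dot b (y + v))) = (-(dot b y)) + (-(dot b v)) := by
        simp only [dot_eq, dotProduct_add]; ring
      rw [h1, h2, zeta_val_add]
      ring
    have hz : zeta p ^ ((-(dot b v)).val) ≠ 1 :=
      zeta_val_ne_one p _ (neg_ne_zero.mpr hbv)
    have h0 : S * (zeta p ^ ((-(dot b v)).val) - 1) = 0 := by linear_combination -htrans
    rcases mul_eq_zero.mp h0 with h | h
    · exact h
    · exact absurd (by linear_combination h) hz
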